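/- In the ring F = ℂ[[x,y,z]]/((z−x)(z²−y), z²−y+2z(z−x)), the identity [z]·[3y + x²] = [4xy] holds, and [3y + x²] maps to a non-zerodivisor of E = ℂ[[x,y]]/(y(x²−y)²) under the inclusion E → F. -/

import Mathlib

noncomputable section

/-- `ℂ[[x,y]]`. -/
abbrev R2 : Type := MvPowerSeries (Fin 2) ℂ
/-- `ℂ[[x,y,z]]`, realized as `ℂ[[x,y]][[z]]`. -/
abbrev S3 : Type := PowerSeries R2

def xx : R2 := MvPowerSeries.X 0
def yy : R2 := MvPowerSeries.X 1
def zz : S3 := PowerSeries.X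
/-- The natural inclusion `ℂ[[x,y]] → ℂ[[x,y,z]]`. -/
def cc : R2 →+* S3 := PowerSeries.C (R := R2)

/-- The ideal `((z−x)(z²−y), z²−y+2z(z−x))` of `ℂ[[x,y,z]]`, defining the fat contour
above a tangential intersection. -/
def IF : Ideal S3 :=
  Ideal.span {(zz - cc xx) * (zz ^ 2 - cc yy), zz ^ 2 - cc yy + 2 * zz * (zz - cc xx)}

/-- The ideal `(y(x²−y)²)` of `ℂ[[x,y]]`, defining the fat silhouette at a tangential
intersection. -/
def IE : Ideal R2 := Ideal.span {yy * (xx ^ 2 - yy) ^ 2}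


section Aux

/-! ### Coefficient machinery for `R2 = ℂ[[x,y]]` -/

def ee (i j : ℕ) : Fin 2 →₀ ℕ := Finsupp.single 0 i + Finsupp.single 1 j
def CC (f : R2) (i j : ℕ) : ℂ := MvPowerSeries.coeff (ee i j) f

lemma ee_apply0 (i j : ℕ) : ee i j 0 = i := by simp [ee, Finsupp.single_apply]
lemma ee_apply1 (i j : ℕ) : ee i j 1 = j := by simp [ee, Finsupp.single_apply]

lemma eq_ee (d : Fin 2 →₀ ℕ) : d = ee (d 0) (d 1) := by
  ext a; fin_cases a <;> simp [ee, Finsupp.single_apply]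

lemma CC_ext {f g : R2} (h : ∀ i j, CC f i j = CC g i j) : f = g := by
  apply MvPowerSeries.ext; intro d
  have := h (d 0) (d 1); rwa [CC, CC, ← eq_ee d] at this

lemma CC_X0_pow_mul (m : ℕ) (f : R2) (i j : ℕ) :
    CC (xx ^ m * f) i j = if m ≤ i then CC f (i - m) j else 0 := by
  have h2 : ee i j - Finsupp.single (0:Fin 2) m = ee (i-m) j := by
    ext a; fin_cases a <;> simp [ee, Finsupp.tsub_apply, Finsupp.single_apply]
  rw [CC, xx, MvPowerSeries.X_pow_eq, MvPowerSeries.coeff_monomial_mul]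
  by_cases hm : m ≤ i
  · rw [if_pos (Finsupp.single_le_iff.mpr (by rwa [ee_apply0])), if_pos hm, one_mul, h2, CC]
  · rw [if_neg (fun hh => hm (by simpa [ee_apply0] using Finsupp.single_le_iff.mp hh)), if_neg hm]

lemma CC_X1_pow_mul (m : ℕ) (f : R2) (i j : ℕ) :
    CC (yy ^ m * f) i j = if m ≤ j then CC f i (j - m) else 0 := by
  have h2 : ee i j - Finsupp.single (1:Fin 2) m = ee i (j-m) := by
    ext a; fin_cases a <;> simp [ee, Finsupp.tsub_apply, Finsupp.single_apply]
  rw [CC, yy, MvPowerSeries.X_pow_eq, MvPowerSeries.coeff_monomial_mul]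
  by_cases hm : m ≤ j
  · rw [if_pos (Finsupp.single_le_iff.mpr (by rwa [ee_apply1])), if_pos hm, one_mul, h2, CC]
  · rw [if_neg (fun hh => hm (by simpa [ee_apply1] using Finsupp.single_le_iff.mp hh)), if_neg hm]

lemma CC_add (f g : R2) (i j : ℕ) : CC (f + g) i j = CC f i j + CC g i j := map_add _ _ _
lemma CC_sub (f g : R2) (i j : ℕ) : CC (f - g) i j = CC f i j - CC g i j := map_sub _ _ _
lemma CC_zero (i j : ℕ) : CC (0 : R2) i j = 0 := map_zero _
lemma CC_two_mul (f : R2) (i j : ℕ) : CC (2 * f) i j = 2 * CC f i j := by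
  rw [CC, show (2:R2) = MvPowerSeries.C (σ := Fin 2) (R := ℂ) 2 from (map_ofNat _ 2).symm,
    MvPowerSeries.coeff_C_mul]; rfl
lemma CC_three_mul (f : R2) (i j : ℕ) : CC (3 * f) i j = 3 * CC f i j := by
  rw [CC, show (3:R2) = MvPowerSeries.C (σ := Fin 2) (R := ℂ) 3 from (map_ofNat _ 3).symm,
    MvPowerSeries.coeff_C_mul]; rfl

/-! ### Division with remainder by `x² + 3y` -/

def Qf (g : R2) : R2 := fun d =>
  (3:ℂ)⁻¹ * ∑ k ∈ Finset.range (d 0 / 2 + 1), (-(3:ℂ)⁻¹) ^ k * CC g (d 0 - 2*k) (d 1 + 1 + k)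
def Rf (g : R2) : R2 := fun d =>
  if d 1 = 0 then ∑ k ∈ Finset.range (d 0 / 2 + 1), (-(3:ℂ)⁻¹) ^ k * CC g (d 0 - 2*k) k else 0

lemma CC_Qf (g : R2) (i j : ℕ) : CC (Qf g) i j =
    (3:ℂ)⁻¹ * ∑ k ∈ Finset.range (i / 2 + 1), (-(3:ℂ)⁻¹) ^ k * CC g (i - 2*k) (j + 1 + k) := by
  show Qf g (ee i j) = _
  rw [Qf, ee_apply0, ee_apply1]

lemma CC_Rf (g : R2) (i : ℕ) : CC (Rf g) i 0 =
    ∑ k ∈ Finset.range (i / 2 + 1), (-(3:ℂ)⁻¹) ^ k * CC g (i - 2*k) k := by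
  show Rf g (ee i 0) = _
  rw [Rf, ee_apply0, ee_apply1]; simp

lemma CC_Rf_pos (g : R2) (i j : ℕ) (hj : 0 < j) : CC (Rf g) i j = 0 := by
  show Rf g (ee i j) = _
  rw [Rf, ee_apply1, if_neg (by omega)]

lemma divA (g : R2) : g = (xx^2 + 3*yy) * Qf g + Rf g := by
  apply CC_ext; intro i j
  rw [show (xx^2 + 3*yy) * Qf g = xx^2 * Qf g + 3*(yy^1 * Qf g) by ring]
  rw [CC_add, CC_add, CC_X0_pow_mul, CC_three_mul, CC_X1_pow_mul]
  rcases j with _ | j'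
  · -- j = 0
    rw [if_neg (show ¬(1:ℕ) ≤ 0 by omega), mul_zero, add_zero, CC_Rf,
      Finset.sum_range_succ']
    simp only [pow_zero, one_mul, Nat.sub_zero, mul_zero, add_zero]
    by_cases hi : 2 ≤ i
    · rw [if_pos hi, CC_Qf]
      rw [show (i-2)/2 + 1 = i/2 by omega]
      have hterm : ∀ k ∈ Finset.range (i/2), (-(3:ℂ)⁻¹)^(k+1) * CC g (i - 2*(k+1)) (k+1)
          = -(3:ℂ)⁻¹ * ((-(3:ℂ)⁻¹)^k * CC g ((i-2) - 2*k) (0 + 1 + k)) := by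
        intro k _
        rw [pow_succ, show i - 2*(k+1) = (i-2) - 2*k by omega, show k + 1 = 0 + 1 + k by omega]
        ring
      rw [Finset.sum_congr rfl hterm, ← Finset.mul_sum]
      ring
    · rw [if_neg hi, show i/2 = 0 by omega]
      simp
  · -- j = j' + 1
    rw [if_pos (show 1 ≤ j'+1 by omega), CC_Rf_pos _ _ _ (by omega), add_zero,
      Nat.add_sub_cancel, CC_Qf g i j', Finset.sum_range_succ']
    simp only [pow_zero, one_mul, Nat.sub_zero, Nat.add_zero, mul_zero, add_zero]
    by_cases hi : 2 ≤ i
    · rw [if_pos hi, CC_Qf]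
      rw [show (i-2)/2 + 1 = i/2 by omega]
      have hterm : ∀ k ∈ Finset.range (i/2), (-(3:ℂ)⁻¹)^(k+1) * CC g (i - 2*(k+1)) (j' + 1 + (k+1))
          = -(3:ℂ)⁻¹ * ((-(3:ℂ)⁻¹)^k * CC g ((i-2) - 2*k) (j' + 1 + 1 + k)) := by
        intro k _
        rw [pow_succ, show i - 2*(k+1) = (i-2) - 2*k by omega,
          show j' + 1 + (k+1) = j' + 1 + 1 + k by omega]
        ring
      rw [Finset.sum_congr rfl hterm, ← Finset.mul_sum]
      ring
    · rw [if_neg hi, show i/2 = 0 by omega]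
      simp

/-! ### The key non-zerodivisor computation -/

lemma keyB (r s : R2) (hr : ∀ i j, 0 < j → CC r i j = 0)
    (h : xx^4*(yy^1*r) - 2*(xx^2*(yy^2*r)) + yy^3*r
        = xx^2*s + 3*(yy^1*s)) : r = 0 := by
  have E : ∀ i j,
      (if 4 ≤ i then (if 1 ≤ j then CC r (i-4) (j-1) else 0) else 0)
        - 2*(if 2 ≤ i then (if 2 ≤ j then CC r (i-2) (j-2) else 0) else 0)
        + (if 3 ≤ j then CC r i (j-3) else 0)
      = (if 2 ≤ i then CC s (i-2) j else 0) + 3*(if 1 ≤ j then CC s i (j-1) else 0) := by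
    intro i j
    have h1 : CC (xx^4*(yy^1*r) - 2*(xx^2*(yy^2*r)) + yy^3*r) i j
        = CC (xx^2*s + 3*(yy^1*s)) i j := by rw [h]
    rw [CC_add, CC_sub, CC_two_mul, CC_add, CC_three_mul,
      CC_X0_pow_mul, CC_X0_pow_mul, CC_X0_pow_mul, CC_X1_pow_mul, CC_X1_pow_mul,
      CC_X1_pow_mul, CC_X1_pow_mul] at h1
    exact h1
  -- row 0 of s vanishes
  have s0 : ∀ i, CC s i 0 = 0 := by
    intro i
    have h0 := E (i+2) 0
    simp only [show ¬((1:ℕ) ≤ 0) from by omega, show ¬((2:ℕ) ≤ 0) from by omega,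
      show ¬((3:ℕ) ≤ 0) from by omega, show 2 ≤ i+2 from by omega,
      show i+2-2 = i from by omega, if_true, if_false, ite_true, ite_false,
      if_pos, if_neg, not_false_eq_true, ite_self, mul_zero, add_zero, sub_zero,
      zero_sub, zero_add, neg_eq_zero] at h0
    linear_combination -h0
  -- row 1
  have s1 : ∀ i, CC s i 1 = if 2 ≤ i then CC r (i-2) 0 else 0 := by
    intro i
    have h0 := E (i+2) 1
    simp only [show ((4:ℕ) ≤ i+2) ↔ 2 ≤ i from by omega, show ¬((2:ℕ) ≤ 1) from by omega,
      show ¬((3:ℕ) ≤ 1) from by omega, show ((1:ℕ) ≤ 1) from by omega,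
      show i+2-4 = i-2 from by omega, show i+2-2 = i from by omega,
      show 2 ≤ i+2 from by omega, show (1:ℕ)-1 = 0 from rfl, s0,
      if_true, if_false, ite_true, ite_false, not_false_eq_true, ite_self,
      mul_zero, add_zero, sub_zero, zero_sub, zero_add] at h0
    exact h0.symm
  -- row 2
  have s2 : ∀ i, CC s i 2 = -5 * CC r i 0 := by
    intro i
    have h0 := E (i+2) 2
    rw [hr (i+2-4) (2-1) (by omega)] at h0
    simp only [show ((2:ℕ) ≤ 2) from by omega, show ((1:ℕ) ≤ 2) from by omega,
      show ¬((3:ℕ) ≤ 2) from by omega, show 2 ≤ i+2 from by omega,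
      show i+2-2 = i from by omega, show (2:ℕ)-2 = 0 from rfl, show (2:ℕ)-1 = 1 from rfl,
      s1, if_true, if_false, ite_true, ite_false, not_false_eq_true, ite_self,
      mul_zero, add_zero, sub_zero, zero_sub, zero_add] at h0
    linear_combination -h0
  -- rows >= 3 of s vanish
  have sbig : ∀ i, ∀ j, 3 ≤ j → CC s i j = 0 := by
    intro i
    induction i using Nat.strong_induction_on with
    | _ i ih =>
      intro j hj
      have h0 := E i (j+1)
      rw [hr (i-4) (j+1-1) (by omega), hr (i-2) (j+1-2) (by omega), hr i (j+1-3) (by omega)] at h0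
      simp only [show ((1:ℕ) ≤ j+1) from by omega, show ((2:ℕ) ≤ j+1) from by omega,
        show ((3:ℕ) ≤ j+1) from by omega, show j+1-1 = j from by omega,
        if_true, ite_true, ite_self, mul_zero, add_zero, sub_zero, zero_sub, zero_add,
        neg_eq_zero] at h0
      by_cases hi : 2 ≤ i
      · rw [if_pos hi, ih (i-2) (by omega) (j+1) (by omega)] at h0
        linear_combination -h0/3
      · rw [if_neg hi] at h0
        linear_combination -h0/3
  -- conclude: all coefficients of r vanish
  have rho : ∀ i, CC r i 0 = 0 := by
    intro i
    have h0 := E i 3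
    rw [hr (i-4) (3-1) (by omega), hr (i-2) (3-2) (by omega)] at h0
    simp only [show ((1:ℕ) ≤ 3) from by omega, show ((2:ℕ) ≤ 3) from by omega,
      show ((3:ℕ) ≤ 3) from by omega, show (3:ℕ)-3 = 0 from rfl, show (3:ℕ)-1 = 2 from rfl,
      sbig (i-2) 3 (by omega), s2, if_true, ite_true, ite_self, mul_zero, add_zero,
      sub_zero, zero_sub, zero_add] at h0
    have h16 : (16:ℂ) * CC r i 0 = 0 := by linear_combination h0
    have := mul_eq_zero.mp h16
    simpa using this
  apply CC_ext
  intro i j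
  rw [CC_zero]
  rcases j with _ | j'
  · exact rho i
  · exact hr i (j'+1) (by omega)

end Aux

/-- In `F = ℂ[[x,y,z]]/((z−x)(z²−y), z²−y+2z(z−x))` the identity `[z]·[3y+x²] = [4xy]`
holds, and `3y + x²` is a non-zerodivisor in `E = ℂ[[x,y]]/(y(x²−y)²)` (so `[3y+x²]`
comes from a non-zerodivisor of `E` under the inclusion `E → F`). -/
theorem stmt_19 :
    Ideal.Quotient.mk IF zz * Ideal.Quotient.mk IF (cc (3 * yy + xx ^ 2)) =
        Ideal.Quotient.mk IF (cc (4 * (xx * yy))) ∧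
      Ideal.Quotient.mk IE (3 * yy + xx ^ 2) ∈ nonZeroDivisors (R2 ⧸ IE) := by
  constructor
  · -- the identity in F
    rw [← map_mul, Ideal.Quotient.mk_eq_mk_iff_sub_mem]
    set t : S3 := zz * cc (3 * yy + xx ^ 2) - cc (4 * (xx * yy)) with ht
    have h2 : (2:S3) * t = (-9:S3) * ((zz - cc xx) * (zz ^ 2 - cc yy))
        + (3 * zz - cc xx) * (zz ^ 2 - cc yy + 2 * zz * (zz - cc xx)) := by
      rw [ht]
      simp only [map_add, map_mul, map_pow, map_ofNat]
      ring
    have hmem2 : (2:S3) * t ∈ IF := by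
      rw [h2, IF]
      refine add_mem (Ideal.mul_mem_left _ _ (Ideal.subset_span ?_))
        (Ideal.mul_mem_left _ _ (Ideal.subset_span ?_))
      · exact Set.mem_insert _ _
      · exact Set.mem_insert_of_mem _ rfl
    have hhalf : cc (MvPowerSeries.C (σ := Fin 2) (R := ℂ) 2⁻¹) * (2:S3) = 1 := by
      rw [show (2:S3) = cc (MvPowerSeries.C (σ := Fin 2) (R := ℂ) 2) by
          rw [map_ofNat (MvPowerSeries.C (σ := Fin 2) (R := ℂ)) 2, map_ofNat cc 2],
        ← map_mul, ← map_mul, inv_mul_cancel₀ (two_ne_zero), map_one, map_one]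
    have : t = cc (MvPowerSeries.C (σ := Fin 2) (R := ℂ) 2⁻¹) * ((2:S3) * t) := by
      rw [← mul_assoc, hhalf, one_mul]
    rw [this]
    exact Ideal.mul_mem_left _ _ hmem2
  · -- non-zerodivisor in E
    have ha : (3 * yy + xx ^ 2 : R2) ≠ 0 := by
      intro h0
      have h31 : CC (3 * yy + xx ^ 2) 0 1 = 3 := by
        rw [show (3*yy + xx^2 : R2) = xx^2 * 1 + 3*(yy^1*1) by ring, CC_add, CC_three_mul,
          CC_X0_pow_mul, CC_X1_pow_mul]
        rw [if_neg (by omega), if_pos le_rfl]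
        have : CC (1:R2) 0 0 = 1 := by
          rw [CC, show ee 0 0 = 0 by simp [ee], MvPowerSeries.coeff_zero_one]
        rw [this]; ring
      rw [h0] at h31
      rw [CC_zero] at h31
      norm_num at h31
    rw [mem_nonZeroDivisors_iff_right]
    intro u hu
    obtain ⟨g, rfl⟩ := Ideal.Quotient.mk_surjective u
    rw [← map_mul, Ideal.Quotient.eq_zero_iff_mem, IE, Ideal.mem_span_singleton] at hu
    obtain ⟨q, hq⟩ := hu
    have hdiv := divA q
    set r : R2 := Rf q with hrdef
    set q' : R2 := Qf q with hqdef
    set s : R2 := g - yy * (xx ^ 2 - yy) ^ 2 * q' with hsdef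
    have hr : ∀ i j, 0 < j → CC r i j = 0 := fun i j hj => CC_Rf_pos q i j hj
    have hkey : xx^4*(yy^1*r) - 2*(xx^2*(yy^2*r)) + yy^3*r = xx^2*s + 3*(yy^1*s) := by
      rw [hsdef]
      linear_combination (-(yy*(xx^2 - yy)^2)) * hdiv - hq
    have hr0 : r = 0 := keyB r s hr hkey
    rw [hr0, add_zero] at hdiv
    have hzero : (g - yy * (xx ^ 2 - yy) ^ 2 * q') * (3 * yy + xx ^ 2) = 0 := by
      linear_combination hq + (yy*(xx^2 - yy)^2) * hdiv
    rcases mul_eq_zero.mp hzero with hg | hcontra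
    · rw [Ideal.Quotient.eq_zero_iff_mem, IE, Ideal.mem_span_singleton]
      exact ⟨q', by linear_combination hg⟩
    · exact absurd hcontra ha

end
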